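/- Let r be a positive odd integer and let 𝓛 = 𝓛(r²; 1, 1+r, 1+2r, 1+4r). Let k = ωr + k₀ with integers ω ≥ 0 and 0 ≤ k₀ < r. Let z₀ be the unique integer with 0 ≤ z₀ < r and 2z₀ ≡ k+1 (mod r), and for integers γ and 0 ≤ y₀ < r let x_{y₀,γ} be the unique integer with 0 ≤ x_{y₀,γ} < r and 2x_{y₀,γ} ≡ 1 − 2y₀ + 12z₀ − 2(ω − 2γ + (k₀+1−2z₀)/r) (mod r). Then the number of elements μ = ½(a,b,c,d) ∈ 𝓛 with a > 0, b > 0, c > 0, d < 0 and ‖μ‖₁ = k+2 equals Σ_{γ=0}^{ω+⌊(k₀−z₀)/r⌋} Σ_{y₀=0}^{r−1} Σ_{β=γ+⌈(z₀−y₀)/r⌉}^{ω+⌊(k₀−y₀)/r⌋} ( ω − β + 1 + ⌊(k₀−x_{y₀,γ})/r⌋ + ⌊(x_{y₀,γ}−y₀)/r⌋ ), where empty sums are 0. -/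

import Mathlib

lemma ocf_ediv_neg_small {r t : ℤ} (h1 : -r ≤ t) (h2 : t < 0) : t / r = -1 := by
  have hr : 0 < r := by omega
  have h0 : (t + 1 * r) / r = t / r + 1 := Int.add_mul_ediv_right t 1 (by omega)
  have h3 : (t + 1 * r) / r = 0 := Int.ediv_eq_zero_of_lt (by omega) (by omega)
  omega

lemma ocf_ediv_small {r t : ℤ} (h1 : 0 ≤ t) (h2 : t < r) : t / r = 0 :=
  Int.ediv_eq_zero_of_lt h1 h2

lemma ocf_count (r M b₀ : ℤ) (hr : 0 < r) (hb0 : 0 ≤ b₀) (hbr : b₀ < r) (hM : 0 ≤ M) :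
    ((Finset.Icc (0:ℤ) M).filter (fun B => B % r = b₀)).card = ((M - b₀) / r + 1).toNat := by
  classical
  have himg : (Finset.Icc (0:ℤ) M).filter (fun B => B % r = b₀)
      = (Finset.Icc (0:ℤ) ((M - b₀) / r)).image (fun j => b₀ + r * j) := by
    ext B
    simp only [Finset.mem_filter, Finset.mem_Icc, Finset.mem_image]
    constructor
    · rintro ⟨⟨hB0, hBM⟩, hBr⟩
      have hb' : b₀ % r = b₀ := Int.emod_eq_of_lt hb0 hbr
      have hdvd : r ∣ B - b₀ := by
        have : B % r = b₀ % r := by rw [hBr, hb']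
        exact Int.ModEq.dvd (Int.ModEq.symm this)
      obtain ⟨j, hj⟩ := hdvd
      refine ⟨j, ⟨?_, ?_⟩, by omega⟩
      · by_contra h
        push_neg at h
        have : r * j ≤ r * (-1) := by
          apply mul_le_mul_of_nonneg_left (by omega) (by omega)
        omega
      · rw [Int.le_ediv_iff_mul_le hr]
        have : j * r = r * j := mul_comm _ _
        omega
    · rintro ⟨j, ⟨hj0, hj1⟩, rfl⟩
      have h1 : 0 ≤ r * j := mul_nonneg (by omega) hj0
      have h2 : r * j ≤ r * ((M - b₀) / r) := mul_le_mul_of_nonneg_left hj1 (by omega)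
      have h3 : r * ((M - b₀) / r) ≤ M - b₀ := by
        have := Int.emod_add_mul_ediv (M - b₀) r
        have := Int.emod_nonneg (M - b₀) (by omega : r ≠ 0)
        omega
      refine ⟨⟨by omega, by omega⟩, ?_⟩
      rw [Int.add_mul_emod_self_left]
      exact Int.emod_eq_of_lt hb0 hbr
  rw [himg, Finset.card_image_of_injective _ (fun j j' h => by
        have : r * j = r * j' := by omega
        exact mul_left_cancel₀ (by omega : r ≠ 0) this),
     Int.card_Icc]
  congr 1
  omega

lemma ocf_two_floor (r k₀ xx y₀ : ℤ) (hr : 0 < r) (hkr : k₀ < r)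
    (hx0 : 0 ≤ xx) (hxr : xx < r) (hy0 : 0 ≤ y₀) (hyr : y₀ < r) :
    (k₀ - y₀ - (xx - y₀) % r) / r = (k₀ - xx) / r + (xx - y₀) / r := by
  rcases le_or_gt y₀ xx with h | h
  · have he : (xx - y₀) % r = xx - y₀ := Int.emod_eq_of_lt (by omega) (by omega)
    have hd : (xx - y₀) / r = 0 := ocf_ediv_small (by omega) (by omega)
    rw [he, hd, add_zero]
    congr 1
    ring
  · have he : (xx - y₀) % r = xx - y₀ + r := by
      have h1 : (xx - y₀ + r * 1) % r = (xx - y₀) % r := Int.add_mul_emod_self_left ..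
      have h2 : (xx - y₀ + r * 1) % r = xx - y₀ + r * 1 :=
        Int.emod_eq_of_lt (by omega) (by omega)
      omega
    have hd : (xx - y₀) / r = -1 := ocf_ediv_neg_small (by omega) (by omega)
    rw [he, hd]
    have h4 : k₀ - y₀ - (xx - y₀ + r) = (k₀ - xx) + (-1) * r := by ring
    rw [h4, Int.add_mul_ediv_right _ _ (by omega : r ≠ 0)]

lemma ocf_floor (a : ℤ) (r : ℕ) : ⌊((a : ℚ)) / (r : ℚ)⌋ = a / (r : ℤ) :=
  Rat.floor_intCast_div_natCast a r

lemma ocf_ceil (a : ℤ) (r : ℕ) : ⌈((a : ℚ)) / (r : ℚ)⌉ = -((-a) / (r : ℤ)) := by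
  have h : ((a : ℚ)) / (r : ℚ) = -(((-a : ℤ) : ℚ) / (r : ℚ)) := by push_cast; ring
  rw [h, Int.ceil_neg, ocf_floor]

lemma ocf_nonneg_of {r v t : ℤ} (hr : 0 < r) (h : r * v = t) (ht : -r < t) : 0 ≤ v := by
  by_contra h'
  push_neg at h'
  have : r * v ≤ r * (-1) := mul_le_mul_of_nonneg_left (by omega) (by omega)
  omega

lemma ocf_eq_zero_of {r v t : ℤ} (hr : 0 < r) (h : r * v = t) (h1 : -r < t) (h2 : t < r) :
    v = 0 := by
  rcases lt_trichotomy v 0 with hv | hv | hv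
  · have : r * v ≤ r * (-1) := mul_le_mul_of_nonneg_left (by omega) (by omega)
    omega
  · exact hv
  · have : r * 1 ≤ r * v := mul_le_mul_of_nonneg_left (by omega) (by omega)
    omega

lemma ocf_mul_ediv_le {r : ℤ} (t : ℤ) (hr : 0 < r) : r * (t / r) ≤ t := by
  have h1 := Int.emod_add_mul_ediv t r
  have h2 := Int.emod_nonneg t (by omega : r ≠ 0)
  omega

lemma ocf_le_ediv {r v t : ℤ} (hr : 0 < r) (h : v * r ≤ t) : v ≤ t / r :=
  (Int.le_ediv_iff_mul_le hr).mpr h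

def ocfF (r : ℕ) (ω k₀ z₀ : ℤ) (q : Σ _ : ℤ × ℤ, Σ _ : ℤ, ℤ) : ℤ × ℤ × ℤ × ℤ :=
  (2 * (ω * (r:ℤ) + k₀ - q.1.2 - (r:ℤ) * q.2.1 - q.2.2) + 1,
   2 * q.2.2 + 1,
   2 * (q.1.2 + (r:ℤ) * q.2.1 - z₀ - (r:ℤ) * q.1.1) + 1,
   -(2 * (z₀ + (r:ℤ) * q.1.1) + 1))

noncomputable def ocfT (r : ℕ) (ω k₀ z₀ : ℤ) (x : ℤ → ℤ → ℤ) : Finset (Σ _ : ℤ × ℤ, Σ _ : ℤ, ℤ) :=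
  ((Finset.Icc (0:ℤ) (ω + (k₀ - z₀) / (r:ℤ))) ×ˢ (Finset.Icc (0:ℤ) ((r:ℤ) - 1))).sigma
    fun p => (Finset.Icc (p.1 + -(-(z₀ - p.2) / (r:ℤ))) (ω + (k₀ - p.2) / (r:ℤ))).sigma
      fun β => (Finset.Icc (0:ℤ) (ω * (r:ℤ) + k₀ - p.2 - (r:ℤ) * β)).filter
        (fun B => B % (r:ℤ) = (x p.2 p.1 - p.2) % (r:ℤ))

lemma ocf_mem {r : ℕ} {ω k₀ z₀ : ℤ} {x : ℤ → ℤ → ℤ} {γ y₀ β B : ℤ} :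
    (⟨(γ, y₀), β, B⟩ : Σ _ : ℤ × ℤ, Σ _ : ℤ, ℤ) ∈ ocfT r ω k₀ z₀ x ↔
      ((0 ≤ γ ∧ γ ≤ ω + (k₀ - z₀) / (r:ℤ)) ∧
      (0 ≤ y₀ ∧ y₀ ≤ (r:ℤ) - 1)) ∧
      ((γ + -(-(z₀ - y₀) / (r:ℤ)) ≤ β ∧ β ≤ ω + (k₀ - y₀) / (r:ℤ)) ∧
      ((0 ≤ B ∧ B ≤ ω * (r:ℤ) + k₀ - y₀ - (r:ℤ) * β) ∧
      B % (r:ℤ) = (x y₀ γ - y₀) % (r:ℤ))) := by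
  simp [ocfT, Finset.mem_sigma, Finset.mem_product, Finset.mem_Icc, Finset.mem_filter]

theorem orthant_count_formula (r : ℕ) (hr : 0 < r) (hrodd : Odd r)
    (ω k₀ : ℤ) (hω : 0 ≤ ω) (hk₀ : 0 ≤ k₀) (hk₀r : k₀ < (r : ℤ))
    (z₀ : ℤ) (hz₀0 : 0 ≤ z₀) (hz₀r : z₀ < (r : ℤ))
    (hz₀ : 2 * z₀ ≡ ω * r + k₀ + 1 [ZMOD (r : ℤ)])
    (x : ℤ → ℤ → ℤ)
    (hx : ∀ y₀ γ : ℤ, 0 ≤ y₀ → y₀ < (r : ℤ) →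
      0 ≤ x y₀ γ ∧ x y₀ γ < (r : ℤ) ∧
      2 * x y₀ γ ≡
        1 - 2 * y₀ + 12 * z₀ - 2 * (ω - 2 * γ + (k₀ + 1 - 2 * z₀) / (r : ℤ))
        [ZMOD (r : ℤ)]) :
    (Set.ncard {v : ℤ × ℤ × ℤ × ℤ |
        Odd v.1 ∧ Odd v.2.1 ∧ Odd v.2.2.1 ∧ Odd v.2.2.2 ∧
        0 < v.1 ∧ 0 < v.2.1 ∧ 0 < v.2.2.1 ∧ v.2.2.2 < 0 ∧
        |v.1| + |v.2.1| + |v.2.2.1| + |v.2.2.2| = 2 * (ω * r + k₀) + 4 ∧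
        ((r : ℤ) ^ 2 ∣ v.1 + (1 + (r : ℤ)) * v.2.1 + (1 + 2 * (r : ℤ)) * v.2.2.1 +
          (1 + 4 * (r : ℤ)) * v.2.2.2)} : ℤ) =
      ∑ γ ∈ Finset.Icc (0 : ℤ) (ω + ⌊((k₀ - z₀ : ℤ) : ℚ) / (r : ℚ)⌋),
        ∑ y₀ ∈ Finset.Icc (0 : ℤ) ((r : ℤ) - 1),
          ∑ β ∈ Finset.Icc (γ + ⌈((z₀ - y₀ : ℤ) : ℚ) / (r : ℚ)⌉)
              (ω + ⌊((k₀ - y₀ : ℤ) : ℚ) / (r : ℚ)⌋),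
            (ω - β + 1 + ⌊((k₀ - x y₀ γ : ℤ) : ℚ) / (r : ℚ)⌋ +
              ⌊((x y₀ γ - y₀ : ℤ) : ℚ) / (r : ℚ)⌋) := by
  classical
  have hrz : (0:ℤ) < (r:ℤ) := by exact_mod_cast hr
  have hrne : (r:ℤ) ≠ 0 := by omega
  obtain ⟨m, hm⟩ := hrodd
  have hco2 : IsCoprime ((r:ℤ)) 2 := ⟨1, -(m:ℤ), by push_cast [hm]; ring⟩
  have hdvd2 : ∀ t : ℤ, (r:ℤ) ∣ 2 * t → (r:ℤ) ∣ t := by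
    intro t ht
    exact hco2.dvd_of_dvd_mul_right (by rwa [mul_comm] at ht)
  have hdvd4 : ∀ t : ℤ, (r:ℤ) ∣ 4 * t → (r:ℤ) ∣ t := by
    intro t ht
    exact hdvd2 t (hdvd2 (2 * t) (by rwa [show (2:ℤ) * (2 * t) = 4 * t by ring]))
  have hz' : (r:ℤ) ∣ ω * (r:ℤ) + k₀ + 1 - 2 * z₀ := by
    have h := Int.ModEq.dvd hz₀
    rwa [show (ω * (r:ℤ) + k₀ + 1) - 2 * z₀ = ω * (r:ℤ) + k₀ + 1 - 2 * z₀ by ring] at h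
  have hre : (r:ℤ) ∣ k₀ + 1 - 2 * z₀ := by
    obtain ⟨t, ht⟩ := hz'
    exact ⟨t - ω, by linear_combination ht⟩
  have hre' : (r:ℤ) * ((k₀ + 1 - 2 * z₀) / (r:ℤ)) = k₀ + 1 - 2 * z₀ :=
    Int.mul_ediv_cancel' hre
  have hset : {v : ℤ × ℤ × ℤ × ℤ |
        Odd v.1 ∧ Odd v.2.1 ∧ Odd v.2.2.1 ∧ Odd v.2.2.2 ∧
        0 < v.1 ∧ 0 < v.2.1 ∧ 0 < v.2.2.1 ∧ v.2.2.2 < 0 ∧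
        |v.1| + |v.2.1| + |v.2.2.1| + |v.2.2.2| = 2 * (ω * r + k₀) + 4 ∧
        ((r : ℤ) ^ 2 ∣ v.1 + (1 + (r : ℤ)) * v.2.1 + (1 + 2 * (r : ℤ)) * v.2.2.1 +
          (1 + 4 * (r : ℤ)) * v.2.2.2)}
      = ↑((ocfT r ω k₀ z₀ x).image (ocfF r ω k₀ z₀)) := by
    ext v
    obtain ⟨a, b, c, d⟩ := v
    simp only [Set.mem_setOf_eq, Finset.coe_image, Set.mem_image, Finset.mem_coe]
    constructor
    · rintro ⟨⟨A, hA⟩, ⟨B, hB⟩, ⟨C, hC⟩, ⟨D', hD'⟩, ha, hb, hc, hd, hnorm, hdiv⟩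
      set D : ℤ := -D' - 1 with hDdef
      have hD : d = -(2 * D + 1) := by omega
      have hA0 : 0 ≤ A := by omega
      have hB0 : 0 ≤ B := by omega
      have hC0 : 0 ≤ C := by omega
      have hD0 : 0 ≤ D := by omega
      rw [abs_of_pos ha, abs_of_pos hb, abs_of_pos hc, abs_of_neg hd] at hnorm
      have hsum : A + B + C + D = ω * (r:ℤ) + k₀ := by linarith
      have hE : a + (1 + (r:ℤ)) * b + (1 + 2 * (r:ℤ)) * c + (1 + 4 * (r:ℤ)) * d
          = 2 * (ω * (r:ℤ) + k₀ + 1 - 2 * D) + (r:ℤ) * (2 * B + 4 * C - 8 * D - 1) := by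
        linear_combination hA + (1 + (r:ℤ)) * hB + (1 + 2 * (r:ℤ)) * hC
          + (1 + 4 * (r:ℤ)) * hD + 2 * hsum
      have hrE : (r:ℤ) ∣ 2 * (ω * (r:ℤ) + k₀ + 1 - 2 * D) := by
        obtain ⟨t, ht⟩ := (dvd_pow_self (r:ℤ) (by norm_num : 2 ≠ 0)).trans (hE ▸ hdiv)
        exact ⟨t - (2 * B + 4 * C - 8 * D - 1), by linear_combination ht⟩
      have h4d : (r:ℤ) ∣ 4 * (z₀ - D) := by
        obtain ⟨s, hs⟩ := hz'
        obtain ⟨t, ht⟩ := hrE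
        exact ⟨t - 2 * s, by linear_combination ht - 2 * hs⟩
      obtain ⟨g, hg⟩ := hdvd4 _ h4d
      set γ : ℤ := -g with hγdef
      have hDγ : (r:ℤ) * γ = D - z₀ := by rw [hγdef]; linear_combination hg
      have hγ0 : 0 ≤ γ := ocf_nonneg_of hrz hDγ (by linarith)
      have hγ1 : γ ≤ ω + (k₀ - z₀) / (r:ℤ) := by
        have h1 : (γ - ω) * (r:ℤ) ≤ k₀ - z₀ := by linarith
        have h2 := ocf_le_ediv hrz h1
        linarith
      have hY := Int.emod_add_mul_ediv (C + D) (r:ℤ)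
      set y₀ : ℤ := (C + D) % (r:ℤ) with hy₀def
      set β : ℤ := (C + D) / (r:ℤ) with hβdef
      have hy0 : 0 ≤ y₀ := Int.emod_nonneg _ hrne
      have hyr : y₀ < (r:ℤ) := Int.emod_lt_of_pos _ hrz
      have hβlo : γ + -(-(z₀ - y₀) / (r:ℤ)) ≤ β := by
        rw [neg_sub]
        have h1 : (γ - β) * (r:ℤ) ≤ y₀ - z₀ := by linarith
        have h2 := ocf_le_ediv hrz h1
        linarith
      have hβhi : β ≤ ω + (k₀ - y₀) / (r:ℤ) := by
        have h1 : (β - ω) * (r:ℤ) ≤ k₀ - y₀ := by linarith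
        have h2 := ocf_le_ediv hrz h1
        linarith
      have hBM : B ≤ ω * (r:ℤ) + k₀ - y₀ - (r:ℤ) * β := by linarith
      have hU : a + (1 + (r:ℤ)) * b + (1 + 2 * (r:ℤ)) * c + (1 + 4 * (r:ℤ)) * d
          = (r:ℤ) * (2 * (ω + (k₀ + 1 - 2 * z₀) / (r:ℤ)) - 4 * γ
              + (2 * B + 4 * C - 8 * D - 1)) := by
        linear_combination hE - 2 * hre' + 4 * hDγ
      have hrU : (r:ℤ) ∣ (2 * (ω + (k₀ + 1 - 2 * z₀) / (r:ℤ)) - 4 * γ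
          + (2 * B + 4 * C - 8 * D - 1)) := by
        obtain ⟨t, ht⟩ := hdiv
        exact ⟨t, mul_left_cancel₀ hrne (by linear_combination ht - hU)⟩
      obtain ⟨u, hu⟩ := hrU
      obtain ⟨hx0, hxr, hxc⟩ := hx y₀ γ hy0 hyr
      obtain ⟨v', hv⟩ := Int.ModEq.dvd hxc
      have h2B : (r:ℤ) ∣ 2 * (B - (x y₀ γ - y₀)) :=
        ⟨u + v' - 4 * β + 12 * γ, by linear_combination hu + hv + 4 * hY - 12 * hDγ⟩
      have hBmod : B % (r:ℤ) = (x y₀ γ - y₀) % (r:ℤ) := by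
        obtain ⟨w, hw⟩ := hdvd2 _ h2B
        have h5 : B ≡ (x y₀ γ - y₀) [ZMOD (r:ℤ)] :=
          Int.ModEq.symm (Int.modEq_iff_dvd.mpr ⟨w, by linear_combination hw⟩)
        exact h5
      refine ⟨⟨(γ, y₀), β, B⟩,
        ocf_mem.mpr ⟨⟨⟨hγ0, hγ1⟩, ⟨hy0, by omega⟩⟩, ⟨⟨hβlo, hβhi⟩, ⟨⟨hB0, hBM⟩, hBmod⟩⟩⟩, ?_⟩
      simp only [ocfF, Prod.mk.injEq]
      exact ⟨by linarith, by linarith, by linarith, by linarith⟩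
    · rintro ⟨⟨⟨γ, y₀⟩, β, B⟩, hqT, heq⟩
      simp only [ocfF, Prod.mk.injEq] at heq
      obtain ⟨ha', hb', hc', hd'⟩ := heq
      subst ha' hb' hc' hd'
      rw [ocf_mem] at hqT
      obtain ⟨⟨⟨hγ0, hγ1⟩, ⟨hy0, hyr⟩⟩, ⟨⟨hβlo, hβhi⟩, ⟨⟨hB0, hBM⟩, hBmod⟩⟩⟩ := hqT
      have hrγ : 0 ≤ (r:ℤ) * γ := mul_nonneg hrz.le hγ0
      have hC0 : 0 ≤ y₀ + (r:ℤ) * β - z₀ - (r:ℤ) * γ := by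
        rw [neg_sub] at hβlo
        have h2 : (r:ℤ) * (γ - β) ≤ (r:ℤ) * ((y₀ - z₀) / (r:ℤ)) :=
          mul_le_mul_of_nonneg_left (by linarith) hrz.le
        have h3 := ocf_mul_ediv_le (y₀ - z₀) hrz
        nlinarith
      have hapos : 0 < 2 * (ω * (r:ℤ) + k₀ - y₀ - (r:ℤ) * β - B) + 1 := by linarith
      have hbpos : 0 < 2 * B + 1 := by linarith
      have hcpos : 0 < 2 * (y₀ + (r:ℤ) * β - z₀ - (r:ℤ) * γ) + 1 := by linarith
      have hdneg : -(2 * (z₀ + (r:ℤ) * γ) + 1) < 0 := by linarith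
      obtain ⟨hx0, hxr, hxc⟩ := hx y₀ γ hy0 (by omega)
      obtain ⟨v', hv⟩ := Int.ModEq.dvd hxc
      have hBm : B ≡ (x y₀ γ - y₀) [ZMOD (r:ℤ)] := hBmod
      obtain ⟨u, hu⟩ := Int.ModEq.dvd hBm
      refine ⟨⟨ω * (r:ℤ) + k₀ - y₀ - (r:ℤ) * β - B, by ring⟩, ⟨B, by ring⟩,
        ⟨y₀ + (r:ℤ) * β - z₀ - (r:ℤ) * γ, by ring⟩, ⟨-(z₀ + (r:ℤ) * γ) - 1, by ring⟩,
        hapos, hbpos, hcpos, hdneg, ?_, ?_⟩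
      · rw [abs_of_pos hapos, abs_of_pos hbpos, abs_of_pos hcpos, abs_of_neg hdneg]
        ring
      · exact ⟨-2 * u - v' + 4 * β - 12 * γ,
          by linear_combination (-2 : ℤ) * hre' - 2 * (r:ℤ) * hu - (r:ℤ) * hv⟩
  have hinj : Set.InjOn (ocfF r ω k₀ z₀) ↑(ocfT r ω k₀ z₀ x) := by
    rintro ⟨⟨γ, y⟩, β, B⟩ hq ⟨⟨γ', y'⟩, β', B'⟩ hq' heq
    rw [Finset.mem_coe, ocf_mem] at hq hq'
    simp only [ocfF, Prod.mk.injEq] at heq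
    obtain ⟨h1, h2, h3, h4⟩ := heq
    have hγ : γ = γ' := by
      have h5 : (r:ℤ) * (γ - γ') = 0 := by linarith
      rcases mul_eq_zero.mp h5 with h | h
      · omega
      · omega
    subst hγ
    have hy0 : 0 ≤ y := hq.1.2.1
    have hyr : y ≤ (r:ℤ) - 1 := hq.1.2.2
    have hy0' : 0 ≤ y' := hq'.1.2.1
    have hyr' : y' ≤ (r:ℤ) - 1 := hq'.1.2.2
    have hββ : β - β' = 0 := by
      refine ocf_eq_zero_of hrz (show (r:ℤ) * (β - β') = y' - y by linarith)
        (by omega) (by omega)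
    have hβ : β = β' := by omega
    subst hβ
    have hy : y = y' := by linarith
    subst hy
    have hB : B = B' := by omega
    subst hB
    rfl
  rw [hset, Set.ncard_coe_finset, Finset.card_image_of_injOn hinj]
  simp only [ocf_floor, ocf_ceil]
  unfold ocfT
  rw [Finset.card_sigma]
  push_cast
  rw [Finset.sum_product]
  refine Finset.sum_congr rfl fun γ hγ => ?_
  refine Finset.sum_congr rfl fun y₀ hy => ?_
  rw [Finset.card_sigma]
  push_cast
  refine Finset.sum_congr rfl fun β hβ => ?_
  rw [Finset.mem_Icc] at hy hβ
  obtain ⟨hy0, hyr⟩ := hy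
  obtain ⟨hx0, hxr, _⟩ := hx y₀ γ hy0 (by omega)
  have hb0 : 0 ≤ (x y₀ γ - y₀) % (r:ℤ) := Int.emod_nonneg _ hrne
  have hbr : (x y₀ γ - y₀) % (r:ℤ) < (r:ℤ) := Int.emod_lt_of_pos _ hrz
  have hM0 : (0:ℤ) ≤ ω * (r:ℤ) + k₀ - y₀ - (r:ℤ) * β := by
    have h1 : β - ω ≤ (k₀ - y₀) / (r:ℤ) := by linarith [hβ.2]
    have h2 : (r:ℤ) * (β - ω) ≤ (r:ℤ) * ((k₀ - y₀) / (r:ℤ)) :=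
      mul_le_mul_of_nonneg_left h1 hrz.le
    have h3 := ocf_mul_ediv_le (k₀ - y₀) hrz
    nlinarith
  rw [ocf_count (r:ℤ) _ _ hrz hb0 hbr hM0]
  have hnn : (0:ℤ) ≤ (ω * (r:ℤ) + k₀ - y₀ - (r:ℤ) * β - (x y₀ γ - y₀) % (r:ℤ)) / (r:ℤ) + 1 := by
    have h1 : (-1:ℤ) ≤ (ω * (r:ℤ) + k₀ - y₀ - (r:ℤ) * β - (x y₀ γ - y₀) % (r:ℤ)) / (r:ℤ) :=
      ocf_le_ediv hrz (by linarith)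
    linarith
  rw [Int.toNat_of_nonneg hnn]
  have key : ω * (r:ℤ) + k₀ - y₀ - (r:ℤ) * β - (x y₀ γ - y₀) % (r:ℤ)
      = (k₀ - y₀ - (x y₀ γ - y₀) % (r:ℤ)) + (ω - β) * (r:ℤ) := by ring
  rw [key, Int.add_mul_ediv_right _ _ hrne,
    ocf_two_floor (r:ℤ) k₀ (x y₀ γ) y₀ hrz hk₀r hx0 hxr hy0 (by omega)]
  ring
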